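/- Let H be a complex Hilbert space and (f_n)_{n∈ℕ} a frame for H with optimal bounds 0 < A ≤ B (A is the largest valid lower frame bound and B the smallest valid upper frame bound) such that f_n ≠ 0 for all n. Suppose that for every strictly increasing sequence (n_k)_{k∈ℕ} of natural numbers, the subfamily (f_{n_k})_k is a frame sequence whose optimal bounds are again A and B. Then (f_n) is an exact frame: for every m ∈ ℕ, the family (f_n)_{n≠m} is not a frame for H. -/

import Mathlib

open scoped InnerProductSpace
open Finset

section ExactFrameAux

variable {H : Type*} [NormedAddCommGroup H] [InnerProductSpace ℂ H]

private lemma key_quad (v : ℕ → H) (b : ℕ → ℝ) (δ : ℝ)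
    (hb : ∀ t, 0 ≤ b t)
    (hpair : ∀ s t, s ≠ t → ‖⟪v s, v t⟫_ℂ‖ ≤ b s * b t)
    (hbsum : ∀ T : Finset ℕ, ∑ t ∈ T, (b t)^2 ≤ δ)
    (T : Finset ℕ) (c : ℕ → ℂ) :
    |‖∑ t ∈ T, c t • v t‖^2 - ∑ t ∈ T, ‖c t‖^2 * ‖v t‖^2| ≤ δ * ∑ t ∈ T, ‖c t‖^2 := by
  classical
  set y := ∑ t ∈ T, c t • v t with hy
  set E := ∑ s ∈ T, ∑ t ∈ T.erase s, (starRingEnd ℂ) (c s) * (c t * ⟪v s, v t⟫_ℂ) with hE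
  set D := ∑ t ∈ T, ‖c t‖^2 * ‖v t‖^2 with hD
  have hyy : (⟪y, y⟫_ℂ) = ∑ s ∈ T, ∑ t ∈ T, (starRingEnd ℂ) (c s) * (c t * ⟪v s, v t⟫_ℂ) := by
    simp only [hy, sum_inner, inner_sum, inner_smul_left, inner_smul_right, Finset.mul_sum]
    rw [Finset.sum_comm]
    exact Finset.sum_congr rfl fun s _ => Finset.sum_congr rfl fun t _ => by ring
  have hdiag : ∀ s ∈ T, (starRingEnd ℂ) (c s) * (c s * ⟪v s, v s⟫_ℂ)
      = ((‖c s‖^2 * ‖v s‖^2 : ℝ) : ℂ) := by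
    intro s _
    rw [inner_self_eq_norm_sq_to_K, ← mul_assoc, RCLike.conj_mul]
    norm_cast
  have hsplit : (⟪y, y⟫_ℂ) = ((D : ℝ) : ℂ) + E := by
    rw [hyy]
    calc ∑ s ∈ T, ∑ t ∈ T, (starRingEnd ℂ) (c s) * (c t * ⟪v s, v t⟫_ℂ)
        = ∑ s ∈ T, ((starRingEnd ℂ) (c s) * (c s * ⟪v s, v s⟫_ℂ)
            + ∑ t ∈ T.erase s, (starRingEnd ℂ) (c s) * (c t * ⟪v s, v t⟫_ℂ)) :=
          Finset.sum_congr rfl fun s hs => (Finset.add_sum_erase T _ hs).symm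
      _ = (∑ s ∈ T, (starRingEnd ℂ) (c s) * (c s * ⟪v s, v s⟫_ℂ)) + E := Finset.sum_add_distrib
      _ = ((D : ℝ) : ℂ) + E := by
          rw [Finset.sum_congr rfl hdiag, hD]
          norm_cast
  have hDE : ((D : ℝ) : ℂ) + E = (((‖y‖^2 : ℝ)) : ℂ) := by
    rw [← hsplit, inner_self_eq_norm_sq_to_K]
    norm_cast
  have hre : ‖y‖^2 - D = E.re := by
    have h := congrArg Complex.re hDE
    simp only [Complex.add_re, Complex.ofReal_re] at h
    linarith
  have hEnorm : ‖E‖ ≤ δ * ∑ t ∈ T, ‖c t‖^2 := by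
    calc ‖E‖ ≤ ∑ s ∈ T, ∑ t ∈ T.erase s, (‖c s‖ * b s) * (‖c t‖ * b t) := by
          refine (norm_sum_le _ _).trans (Finset.sum_le_sum fun s hs =>
            (norm_sum_le _ _).trans (Finset.sum_le_sum fun t ht => ?_))
          have hne : s ≠ t := (Finset.ne_of_mem_erase ht).symm
          have h1 : ‖(starRingEnd ℂ) (c s) * (c t * ⟪v s, v t⟫_ℂ)‖
              = ‖c s‖ * (‖c t‖ * ‖⟪v s, v t⟫_ℂ‖) := by
            rw [norm_mul, norm_mul, RCLike.norm_conj]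
          rw [h1]
          calc ‖c s‖ * (‖c t‖ * ‖⟪v s, v t⟫_ℂ‖)
              ≤ ‖c s‖ * (‖c t‖ * (b s * b t)) :=
                mul_le_mul_of_nonneg_left
                  (mul_le_mul_of_nonneg_left (hpair s t hne) (norm_nonneg _)) (norm_nonneg _)
            _ = (‖c s‖ * b s) * (‖c t‖ * b t) := by ring
      _ ≤ ∑ s ∈ T, ∑ t ∈ T, (‖c s‖ * b s) * (‖c t‖ * b t) := by
          refine Finset.sum_le_sum fun s hs => ?_
          refine Finset.sum_le_sum_of_subset_of_nonneg (Finset.erase_subset s T)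
            fun t _ _ => ?_
          have := hb s
          have := hb t
          positivity
      _ = (∑ t ∈ T, ‖c t‖ * b t)^2 := by rw [← Finset.sum_mul_sum, sq]
      _ ≤ (∑ t ∈ T, ‖c t‖^2) * ∑ t ∈ T, (b t)^2 := by
          simpa using Finset.sum_mul_sq_le_sq_mul_sq T (fun t => ‖c t‖) (fun t => b t)
      _ ≤ (∑ t ∈ T, ‖c t‖^2) * δ := by
          refine mul_le_mul_of_nonneg_left (hbsum T) ?_
          positivity
      _ = δ * ∑ t ∈ T, ‖c t‖^2 := mul_comm _ _
  rw [hre]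
  exact (Complex.abs_re_le_norm E).trans hEnorm

private lemma bessel_bound (v : ℕ → H) (b : ℕ → ℝ) (δ R0 : ℝ)
    (hδ : 0 ≤ δ) (hR0 : 0 ≤ R0)
    (hb : ∀ t, 0 ≤ b t)
    (hpair : ∀ s t, s ≠ t → ‖⟪v s, v t⟫_ℂ‖ ≤ b s * b t)
    (hbsum : ∀ T : Finset ℕ, ∑ t ∈ T, (b t)^2 ≤ δ)
    (hv : ∀ t, ‖v t‖^2 ≤ R0)
    (x : H) (T : Finset ℕ) :
    ∑ t ∈ T, ‖⟪x, v t⟫_ℂ‖^2 ≤ (R0 + δ) * ‖x‖^2 := by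
  classical
  set c : ℕ → ℂ := fun t => (starRingEnd ℂ) ⟪x, v t⟫_ℂ with hc
  set y := ∑ t ∈ T, c t • v t with hy
  set S := ∑ t ∈ T, ‖⟪x, v t⟫_ℂ‖^2 with hS
  have hS0 : 0 ≤ S := Finset.sum_nonneg fun t _ => by positivity
  have hcS : ∑ t ∈ T, ‖c t‖^2 = S := by
    rw [hS]
    exact Finset.sum_congr rfl fun t _ => by rw [hc, RCLike.norm_conj]
  have hxy : (⟪x, y⟫_ℂ) = ((S : ℝ) : ℂ) := by
    rw [hy, inner_sum]
    simp only [inner_smul_right, hc]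
    rw [hS]
    push_cast
    exact Finset.sum_congr rfl fun t _ => by
      rw [RCLike.conj_mul]
      norm_cast
  have hSle : S ≤ ‖x‖ * ‖y‖ := by
    have h1 : ‖(⟪x, y⟫_ℂ)‖ ≤ ‖x‖ * ‖y‖ := norm_inner_le_norm x y
    rw [hxy] at h1
    have h2 : ‖((S : ℝ) : ℂ)‖ = |S| := by
      rw [Complex.norm_real, Real.norm_eq_abs]
    rw [h2, abs_of_nonneg hS0] at h1
    exact h1
  have hy2 : ‖y‖^2 ≤ (R0 + δ) * S := by
    have hk := key_quad v b δ hb hpair hbsum T c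
    have hD : ∑ t ∈ T, ‖c t‖^2 * ‖v t‖^2 ≤ R0 * S := by
      rw [← hcS, Finset.mul_sum]
      refine Finset.sum_le_sum fun t _ => ?_
      rw [mul_comm (R0 : ℝ) _]
      exact mul_le_mul_of_nonneg_left (hv t) (by positivity)
    have habs := abs_le.mp hk
    rw [hcS] at habs
    nlinarith [habs.2]
  rcases eq_or_lt_of_le hS0 with h0 | h0
  · rw [← h0]
    positivity
  · nlinarith [norm_nonneg x, norm_nonneg y, sq_nonneg (‖x‖ * ‖y‖)]

private lemma gram_lower (v : ℕ → H) (b : ℕ → ℝ) (δ m0 : ℝ)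
    (hb : ∀ t, 0 ≤ b t)
    (hpair : ∀ s t, s ≠ t → ‖⟪v s, v t⟫_ℂ‖ ≤ b s * b t)
    (hbsum : ∀ T : Finset ℕ, ∑ t ∈ T, (b t)^2 ≤ δ)
    (hv : ∀ t, m0 ≤ ‖v t‖^2)
    (T : Finset ℕ) (c : ℕ → ℂ) :
    (m0 - δ) * ∑ t ∈ T, ‖c t‖^2 ≤ ‖∑ t ∈ T, c t • v t‖^2 := by
  have hk := abs_le.mp (key_quad v b δ hb hpair hbsum T c)
  have hD : m0 * ∑ t ∈ T, ‖c t‖^2 ≤ ∑ t ∈ T, ‖c t‖^2 * ‖v t‖^2 := by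
    rw [Finset.mul_sum]
    refine Finset.sum_le_sum fun t _ => ?_
    rw [mul_comm (m0 : ℝ) _]
    exact mul_le_mul_of_nonneg_left (hv t) (by positivity)
  nlinarith [hk.1]

private lemma span_lower (v : ℕ → H) (b : ℕ → ℝ) (δ m0 : ℝ)
    (hb : ∀ t, 0 ≤ b t)
    (hpair : ∀ s t, s ≠ t → ‖⟪v s, v t⟫_ℂ‖ ≤ b s * b t)
    (hbsum : ∀ T : Finset ℕ, ∑ t ∈ T, (b t)^2 ≤ δ)
    (hv : ∀ t, m0 ≤ ‖v t‖^2) (hc' : 0 < m0 - δ)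
    (x : H) (hx : x ∈ (Submodule.span ℂ (Set.range v)).topologicalClosure)
    (hsum : Summable fun t => ‖⟪x, v t⟫_ℂ‖^2) :
    (m0 - δ) * ‖x‖^2 ≤ ∑' t, ‖⟪x, v t⟫_ℂ‖^2 := by
  classical
  set c' := m0 - δ with hc'def
  set Q := ∑' t, ‖⟪x, v t⟫_ℂ‖^2 with hQ
  have hQ0 : 0 ≤ Q := tsum_nonneg fun t => by positivity
  have hspan : ∀ y ∈ Submodule.span ℂ (Set.range v),
      c' * ‖⟪x, y⟫_ℂ‖^2 ≤ Q * ‖y‖^2 := by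
    intro y hy
    obtain ⟨d, rfl⟩ := Finsupp.mem_span_range_iff_exists_finsupp.mp hy
    have hrep : (d.sum fun i a => a • v i) = ∑ t ∈ d.support, d t • v t := rfl
    rw [hrep]
    have h1 : ⟪x, ∑ t ∈ d.support, d t • v t⟫_ℂ = ∑ t ∈ d.support, d t * ⟪x, v t⟫_ℂ := by
      simp [inner_sum, inner_smul_right]
    have h2 : ‖⟪x, ∑ t ∈ d.support, d t • v t⟫_ℂ‖ ≤ ∑ t ∈ d.support, ‖d t‖ * ‖⟪x, v t⟫_ℂ‖ := by
      rw [h1]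
      exact (norm_sum_le _ _).trans (le_of_eq (Finset.sum_congr rfl fun t _ => norm_mul _ _))
    have h3 : (∑ t ∈ d.support, ‖d t‖ * ‖⟪x, v t⟫_ℂ‖)^2
        ≤ (∑ t ∈ d.support, ‖d t‖^2) * (∑ t ∈ d.support, ‖⟪x, v t⟫_ℂ‖^2) :=
      Finset.sum_mul_sq_le_sq_mul_sq _ _ _
    have h4 : ∑ t ∈ d.support, ‖⟪x, v t⟫_ℂ‖^2 ≤ Q :=
      Summable.sum_le_tsum _ (fun t _ => by positivity) hsum
    have h5 := gram_lower v b δ m0 hb hpair hbsum hv d.support (fun t => d t)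
    have hd0 : 0 ≤ ∑ t ∈ d.support, ‖d t‖^2 := Finset.sum_nonneg fun t _ => by positivity
    have hnn : 0 ≤ ∑ t ∈ d.support, ‖d t‖ * ‖⟪x, v t⟫_ℂ‖ :=
      Finset.sum_nonneg fun t _ => by positivity
    have h6 : ‖⟪x, ∑ t ∈ d.support, d t • v t⟫_ℂ‖^2
        ≤ (∑ t ∈ d.support, ‖d t‖^2) * Q := by
      nlinarith [norm_nonneg (⟪x, ∑ t ∈ d.support, d t • v t⟫_ℂ)]
    nlinarith [norm_nonneg (∑ t ∈ d.support, d t • v t)]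
  have hclosed : IsClosed {y : H | c' * ‖⟪x, y⟫_ℂ‖^2 ≤ Q * ‖y‖^2} := by
    apply isClosed_le
    · exact (continuous_const.mul (((innerSL ℂ x).continuous.norm).pow 2))
    · exact continuous_const.mul (continuous_norm.pow 2)
  have hx' : x ∈ closure (Submodule.span ℂ (Set.range v) : Set H) := by
    rw [← Submodule.topologicalClosure_coe]
    exact hx
  have hxmem : c' * ‖⟪x, x⟫_ℂ‖^2 ≤ Q * ‖x‖^2 := closure_minimal hspan hclosed hx'
  have hxx : ‖⟪x, x⟫_ℂ‖ = ‖x‖^2 := by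
    rw [inner_self_eq_norm_sq_to_K]
    rw [norm_pow, RCLike.norm_ofReal, abs_norm]
  rw [hxx] at hxmem
  rcases eq_or_ne x 0 with rfl | hx0
  · simpa using hQ0
  · have hpos : 0 < ‖x‖^2 := by
      have := norm_pos_iff.mpr hx0
      positivity
    nlinarith

private lemma selection (f : ℕ → H)
    (hsummable : ∀ i : ℕ, Summable fun k => ‖⟪f i, f k⟫_ℂ‖^2)
    (M : Set ℕ) (hM : M.Infinite) (b : ℕ → ℝ) (hb : ∀ t, 0 < b t)
    (hbanti : Antitone b) :
    ∃ g : ℕ → ℕ, StrictMono g ∧ (∀ t, g t ∈ M) ∧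
      ∀ s t, s < t → ‖⟪f (g s), f (g t)⟫_ℂ‖ ≤ b s * b t := by
  classical
  have next : ∀ p t : ℕ, ∃ k, p < k ∧ k ∈ M ∧
      ∀ i ≤ p, ‖⟪f i, f k⟫_ℂ‖ ≤ b (t+1) * b t := by
    intro p t
    have hev : ∀ᶠ k in Filter.atTop,
        ∀ i ∈ Finset.range (p+1), ‖⟪f i, f k⟫_ℂ‖ ≤ b (t+1) * b t := by
      rw [Filter.eventually_all_finset]
      intro i _
      have h0 : 0 < b (t+1) * b t := mul_pos (hb _) (hb _)
      have htend := (hsummable i).tendsto_atTop_zero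
      have hev2 := htend.eventually (gt_mem_nhds (show (0:ℝ) < (b (t+1) * b t)^2 by positivity))
      filter_upwards [hev2] with k hk
      nlinarith [norm_nonneg (⟪f i, f k⟫_ℂ)]
    obtain ⟨N, hN⟩ := Filter.eventually_atTop.mp hev
    obtain ⟨k, hkM, hk⟩ := hM.exists_gt (max p N)
    exact ⟨k, lt_of_le_of_lt (le_max_left _ _) hk, hkM,
      fun i hi => hN k (le_trans (le_max_right _ _) hk.le) i (Finset.mem_range.mpr (by omega))⟩
  choose nxt h1 h2 h3 using next
  obtain ⟨k0, hk0⟩ := hM.nonempty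
  set g : ℕ → ℕ := fun n => Nat.rec k0 (fun t prev => nxt prev t) n with hg
  have hgs : ∀ t, g (t+1) = nxt (g t) t := fun t => rfl
  have hmono : StrictMono g := strictMono_nat_of_lt_succ fun t => by
    rw [hgs]; exact h1 _ t
  have hmem : ∀ t, g t ∈ M := by
    intro t
    cases t with
    | zero => exact hk0
    | succ t => rw [hgs]; exact h2 _ t
  refine ⟨g, hmono, hmem, ?_⟩
  intro s t hst
  obtain ⟨t', rfl⟩ : ∃ t', t = t'+1 := ⟨t-1, by omega⟩
  have hs' : s ≤ t' := by omega
  have hle : g s ≤ g t' := hmono.monotone hs'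
  have hkey := h3 (g t') t' (g s) hle
  rw [hgs]
  calc ‖⟪f (g s), f (nxt (g t') t')⟫_ℂ‖ ≤ b (t'+1) * b t' := hkey
    _ ≤ b s * b (t'+1) := by
        have hba := hbanti hs'
        have hbp := (hb (t'+1)).le
        nlinarith

private lemma bfun_props (δ : ℝ) (hδ : 0 < δ) :
    ∃ b : ℕ → ℝ, (∀ t, 0 < b t) ∧ Antitone b ∧ ∀ T : Finset ℕ, ∑ t ∈ T, (b t)^2 ≤ δ := by
  refine ⟨fun t => Real.sqrt δ / 2 * (1/2)^t, ?_, ?_, ?_⟩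
  · intro t
    have := Real.sqrt_pos.mpr hδ
    positivity
  · intro s t hst
    have h1 : (1/2:ℝ)^t ≤ (1/2)^s := pow_le_pow_of_le_one (by norm_num) (by norm_num) hst
    have h2 := Real.sqrt_nonneg δ
    simp only
    nlinarith
  · intro T
    have hsq : ∀ t : ℕ, (Real.sqrt δ / 2 * (1/2:ℝ)^t)^2 = δ/4 * (1/4:ℝ)^t := by
      intro t
      have h1 : ((1/2:ℝ)^t)^2 = (1/4:ℝ)^t := by
        rw [← pow_mul, mul_comm, pow_mul]
        norm_num
      rw [mul_pow, div_pow, Real.sq_sqrt hδ.le, h1]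
      ring
    have hsummable : Summable fun t : ℕ => δ/4 * (1/4:ℝ)^t :=
      (summable_geometric_of_lt_one (by norm_num) (by norm_num)).mul_left _
    calc ∑ t ∈ T, (Real.sqrt δ / 2 * (1/2:ℝ)^t)^2
        = ∑ t ∈ T, δ/4 * (1/4:ℝ)^t := Finset.sum_congr rfl fun t _ => hsq t
      _ ≤ ∑' t : ℕ, δ/4 * (1/4:ℝ)^t := Summable.sum_le_tsum T (fun t _ => by positivity) hsummable
      _ = δ/4 * (1 - 1/4)⁻¹ := by
          rw [tsum_mul_left, tsum_geometric_of_lt_one (by norm_num) (by norm_num)]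
      _ ≤ δ := by norm_num; linarith

private lemma appU (f : ℕ → H) (B η : ℝ) (hη : 0 < η)
    (hsummable : ∀ x : H, Summable fun j => ‖⟪x, f j⟫_ℂ‖^2)
    (hsub3 : ∀ g : ℕ → ℕ, StrictMono g → ∀ B' : ℝ,
      (∀ x ∈ (Submodule.span ℂ (Set.range (f ∘ g))).topologicalClosure,
        ∑' k, ‖⟪x, f (g k)⟫_ℂ‖ ^ 2 ≤ B' * ‖x‖ ^ 2) → B ≤ B')
    (hinf : {k : ℕ | ‖f k‖^2 ≤ B - η}.Infinite) : False := by
  classical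
  obtain ⟨b, hbpos, hbanti, hbsum⟩ := bfun_props (η/2) (by linarith)
  obtain ⟨g, hgmono, hgmem, hgpair⟩ := selection f (fun i => hsummable (f i))
    _ hinf b hbpos hbanti
  have hpair : ∀ s t, s ≠ t → ‖⟪f (g s), f (g t)⟫_ℂ‖ ≤ b s * b t := by
    intro s t hst
    rcases lt_or_gt_of_ne hst with h | h
    · exact hgpair s t h
    · rw [norm_inner_symm]
      exact (hgpair t s h).trans (le_of_eq (mul_comm _ _))
  have hR0 : (0:ℝ) ≤ B - η := by
    obtain ⟨k, hk⟩ := hinf.nonempty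
    have h0 : (0:ℝ) ≤ ‖f k‖^2 := by positivity
    exact h0.trans hk
  have hbound : ∀ x : H, ∀ T : Finset ℕ,
      ∑ t ∈ T, ‖⟪x, f (g t)⟫_ℂ‖^2 ≤ (B - η + η/2) * ‖x‖^2 :=
    bessel_bound (fun t => f (g t)) b (η/2) (B - η) (by linarith) hR0 (fun t => (hbpos t).le)
      hpair hbsum (fun t => hgmem t)
  have hfinal := hsub3 g hgmono (B - η + η/2) (fun x _ => by
    refine Summable.tsum_le_of_sum_le ?_ (fun T => hbound x T)
    exact summable_of_sum_le (fun t => by positivity) (fun T => hbound x T))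
  linarith

private lemma appL (f : ℕ → H) (A η : ℝ) (hη : 0 < η) (hA : 0 < A)
    (hsummable : ∀ x : H, Summable fun j => ‖⟪x, f j⟫_ℂ‖^2)
    (hsub2 : ∀ g : ℕ → ℕ, StrictMono g → ∀ A' : ℝ,
      (∀ x ∈ (Submodule.span ℂ (Set.range (f ∘ g))).topologicalClosure,
        A' * ‖x‖ ^ 2 ≤ ∑' k, ‖⟪x, f (g k)⟫_ℂ‖ ^ 2) → A' ≤ A)
    (hinf : {k : ℕ | A + η ≤ ‖f k‖^2}.Infinite) : False := by
  classical
  obtain ⟨b, hbpos, hbanti, hbsum⟩ := bfun_props (η/2) (by linarith)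
  obtain ⟨g, hgmono, hgmem, hgpair⟩ := selection f (fun i => hsummable (f i))
    _ hinf b hbpos hbanti
  have hpair : ∀ s t, s ≠ t → ‖⟪f (g s), f (g t)⟫_ℂ‖ ≤ b s * b t := by
    intro s t hst
    rcases lt_or_gt_of_ne hst with h | h
    · exact hgpair s t h
    · rw [norm_inner_symm]
      exact (hgpair t s h).trans (le_of_eq (mul_comm _ _))
  have hfinal := hsub2 g hgmono (A + η - η/2) (fun x hx => by
    have hs : Summable fun t => ‖⟪x, f (g t)⟫_ℂ‖^2 :=
      (hsummable x).comp_injective hgmono.injective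
    have := span_lower (fun t => f (g t)) b (η/2) (A + η) (fun t => (hbpos t).le)
      hpair hbsum (fun t => hgmem t) (by linarith) x hx hs
    linarith [this])
  linarith

end ExactFrameAux


/-- Let `(f_n)` be a frame for a complex Hilbert space `H` with optimal bounds
`0 < A ≤ B` and `f_n ≠ 0` for all `n`. If every subfamily `(f_{n_k})` along a
strictly increasing sequence `(n_k)` is a frame sequence whose optimal bounds
are again `A` and `B`, then `(f_n)` is exact: removing any single element
leaves a family that is not a frame for `H`. -/
theorem exact_frame_of_optimal_subframe_bounds
    {H : Type*} [NormedAddCommGroup H] [InnerProductSpace ℂ H] [CompleteSpace H]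
    (f : ℕ → H) (A B : ℝ) (hA : 0 < A) (hAB : A ≤ B)
    (hframe : ∀ x : H, A * ‖x‖ ^ 2 ≤ ∑' j, ‖⟪x, f j⟫_ℂ‖ ^ 2 ∧
      ∑' j, ‖⟪x, f j⟫_ℂ‖ ^ 2 ≤ B * ‖x‖ ^ 2)
    (hAopt : ∀ A' : ℝ, (∀ x : H, A' * ‖x‖ ^ 2 ≤ ∑' j, ‖⟪x, f j⟫_ℂ‖ ^ 2) → A' ≤ A)
    (hBopt : ∀ B' : ℝ, (∀ x : H, ∑' j, ‖⟪x, f j⟫_ℂ‖ ^ 2 ≤ B' * ‖x‖ ^ 2) → B ≤ B')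
    (hne : ∀ j, f j ≠ 0)
    (hsub : ∀ g : ℕ → ℕ, StrictMono g →
      (∀ x ∈ (Submodule.span ℂ (Set.range (f ∘ g))).topologicalClosure,
        A * ‖x‖ ^ 2 ≤ ∑' k, ‖⟪x, f (g k)⟫_ℂ‖ ^ 2 ∧
        ∑' k, ‖⟪x, f (g k)⟫_ℂ‖ ^ 2 ≤ B * ‖x‖ ^ 2) ∧
      (∀ A' : ℝ,
        (∀ x ∈ (Submodule.span ℂ (Set.range (f ∘ g))).topologicalClosure,
          A' * ‖x‖ ^ 2 ≤ ∑' k, ‖⟪x, f (g k)⟫_ℂ‖ ^ 2) → A' ≤ A) ∧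
      (∀ B' : ℝ,
        (∀ x ∈ (Submodule.span ℂ (Set.range (f ∘ g))).topologicalClosure,
          ∑' k, ‖⟪x, f (g k)⟫_ℂ‖ ^ 2 ≤ B' * ‖x‖ ^ 2) → B ≤ B')) :
    ∀ m : ℕ, ¬ ∃ A' B' : ℝ, 0 < A' ∧ A' ≤ B' ∧ ∀ x : H,
      A' * ‖x‖ ^ 2 ≤ ∑' i : {i : ℕ // i ≠ m}, ‖⟪x, f i.1⟫_ℂ‖ ^ 2 ∧
      ∑' i : {i : ℕ // i ≠ m}, ‖⟪x, f i.1⟫_ℂ‖ ^ 2 ≤ B' * ‖x‖ ^ 2 := by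
  classical
  intro m hex
  obtain ⟨A', B', hA', hA'B', hred⟩ := hex
  -- summability of the frame coefficients
  have hsummable : ∀ x : H, Summable fun j => ‖⟪x, f j⟫_ℂ‖ ^ 2 := by
    intro x
    by_cases hx : x = 0
    · subst hx
      have hzero : (fun j => ‖⟪(0:H), f j⟫_ℂ‖ ^ 2) = fun _ => (0:ℝ) := by
        funext j
        simp
      rw [hzero]
      exact summable_zero
    · by_contra hns
      have h0 := tsum_eq_zero_of_not_summable hns
      have hl := (hframe x).1
      rw [h0] at hl
      have hxp : 0 < ‖x‖ := norm_pos_iff.mpr hx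
      nlinarith [pow_pos hxp 2]
  -- Step 1 : A = B
  have hABeq : A = B := by
    by_contra hne'
    have hAltB : A < B := lt_of_le_of_ne hAB hne'
    set η := (B - A) / 2 with hη
    have hηpos : 0 < η := by
      rw [hη]
      linarith
    have hunion : {k : ℕ | ‖f k‖^2 ≤ B - η}.Infinite ∨ {k : ℕ | A + η ≤ ‖f k‖^2}.Infinite := by
      by_contra hcon
      push_neg at hcon
      have hfin := Set.Finite.union hcon.1 hcon.2
      have hcover : {k : ℕ | ‖f k‖^2 ≤ B - η} ∪ {k : ℕ | A + η ≤ ‖f k‖^2} = Set.univ := by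
        ext k
        simp only [Set.mem_union, Set.mem_setOf_eq, Set.mem_univ, iff_true]
        rcases le_total (‖f k‖^2) (A + η) with h | h
        · left
          rw [hη] at h ⊢
          linarith
        · right
          exact h
      rw [hcover] at hfin
      exact Set.infinite_univ hfin
    rcases hunion with h | h
    · exact appU f B η hηpos hsummable (fun g hg => (hsub g hg).2.2) h
    · exact appL f A η hηpos hA hsummable (fun g hg => (hsub g hg).2.1) h
  -- Step 2 : A ≤ ‖f m‖²
  have hfm : 0 < ‖f m‖ := norm_pos_iff.mpr (hne m)
  have hnormA : A * ‖f m‖^2 ≤ (‖f m‖^2)^2 := by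
    have key : ∀ ε : ℝ, 0 < ε → A * ‖f m‖^2 ≤ (‖f m‖^2)^2 + ε := by
      intro ε hε
      set u := fun j => ‖⟪f m, f j⟫_ℂ‖ ^ 2 with hu
      have husum : Summable u := hsummable (f m)
      -- find a tail which is small
      have htail : ∃ N : ℕ, m ≤ N ∧ ∑' k, u (k + (N+1)) < ε := by
        have hps := husum.hasSum.tendsto_sum_nat
        have hlim : Filter.Tendsto (fun n => ∑' k, u (k + n)) Filter.atTop (nhds 0) := by
          have heq : ∀ n : ℕ, ∑' k, u (k + n) = (∑' k, u k) - ∑ i ∈ Finset.range n, u i := by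
            intro n
            have := Summable.sum_add_tsum_nat_add n husum
            linarith
          simp only [heq]
          have : Filter.Tendsto (fun n => (∑' k, u k) - ∑ i ∈ Finset.range n, u i)
              Filter.atTop (nhds ((∑' k, u k) - (∑' k, u k))) :=
            Filter.Tendsto.sub tendsto_const_nhds hps
          simpa using this
        have hev := hlim.eventually (gt_mem_nhds hε)
        obtain ⟨N0, hN0⟩ := Filter.eventually_atTop.mp hev
        exact ⟨max m N0, le_max_left _ _,
          hN0 (max m N0 + 1) ((le_max_right m N0).trans (Nat.le_succ _))⟩
      obtain ⟨N, hmN, htail⟩ := htail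
      set g : ℕ → ℕ := fun k => if k = 0 then m else N + k with hgdef
      have hgmono : StrictMono g := by
        apply strictMono_nat_of_lt_succ
        intro n
        cases n with
        | zero => simp [hgdef]; omega
        | succ n => simp [hgdef]
      obtain ⟨hs1, _, _⟩ := hsub g hgmono
      have hxmem : f m ∈ (Submodule.span ℂ (Set.range (f ∘ g))).topologicalClosure := by
        apply Submodule.le_topologicalClosure
        apply Submodule.subset_span
        exact ⟨0, by simp [hgdef]⟩
      have hlow := (hs1 (f m) hxmem).1
      set w := fun k => ‖⟪f m, f (g k)⟫_ℂ‖ ^ 2 with hw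
      have hwsum : Summable w := by
        have := (hsummable (f m)).comp_injective hgmono.injective
        exact this
      have hsplit : ∑' k, w k = w 0 + ∑' k, w (k + 1) := by
        have h := Summable.sum_add_tsum_nat_add 1 hwsum
        rw [Finset.sum_range_one] at h
        linarith
      have hg0 : g 0 = m := by simp [hgdef]
      have hw0 : w 0 = (‖f m‖^2)^2 := by
        show ‖⟪f m, f (g 0)⟫_ℂ‖ ^ 2 = (‖f m‖^2)^2
        rw [hg0, inner_self_eq_norm_sq_to_K, norm_pow, RCLike.norm_ofReal, abs_norm]
      have hwtail : ∑' k, w (k + 1) = ∑' k, u (k + (N+1)) := by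
        apply tsum_congr
        intro k
        show ‖⟪f m, f (g (k+1))⟫_ℂ‖ ^ 2 = ‖⟪f m, f (k + (N+1))⟫_ℂ‖ ^ 2
        have hgk : g (k+1) = k + (N+1) := by
          simp only [hgdef, if_neg (Nat.succ_ne_zero k)]
          omega
        rw [hgk]
      rw [hsplit, hw0, hwtail] at hlow
      linarith
    by_contra hcon
    push_neg at hcon
    have := key ((A * ‖f m‖^2 - (‖f m‖^2)^2)/2) (by linarith)
    linarith
  have hnormA' : A ≤ ‖f m‖^2 := by
    have h2 : 0 < ‖f m‖^2 := by positivity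
    nlinarith
  -- Step 3 : endgame
  set u := fun j => ‖⟪f m, f j⟫_ℂ‖ ^ 2 with hu
  have husum : Summable u := hsummable (f m)
  have hT : ∑' j, u j = A * ‖f m‖^2 := by
    have h1 := (hframe (f m)).1
    have h2 := (hframe (f m)).2
    rw [← hABeq] at h2
    exact le_antisymm h2 h1
  -- split the tsum at m
  have hsplit : ∑' j, u j = u m + ∑' i : {i : ℕ // i ≠ m}, u i.1 := by
    have hind : ∑' i : {i : ℕ // i ≠ m}, u i.1
        = ∑' j, Set.indicator {i : ℕ | i ≠ m} u j := by
      exact tsum_subtype {i : ℕ | i ≠ m} u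
    have heq : ∀ j, u j = (if j = m then u m else 0) + Set.indicator {i : ℕ | i ≠ m} u j := by
      intro j
      by_cases hj : j = m
      · subst hj
        simp [Set.indicator_apply]
      · simp [Set.indicator_apply, hj]
    have hsum1 : Summable (fun j => if j = m then u m else (0:ℝ)) := by
      apply summable_of_ne_finset_zero (s := {m})
      intro j hj
      simp only [Finset.mem_singleton] at hj
      simp [hj]
    have hsum2 : Summable (Set.indicator {i : ℕ | i ≠ m} u) := by
      exact husum.indicator _
    calc ∑' j, u j = ∑' j, ((if j = m then u m else 0) + Set.indicator {i : ℕ | i ≠ m} u j) := by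
          exact tsum_congr heq
      _ = (∑' j, if j = m then u m else 0) + ∑' j, Set.indicator {i : ℕ | i ≠ m} u j :=
          Summable.tsum_add hsum1 hsum2
      _ = u m + ∑' i : {i : ℕ // i ≠ m}, u i.1 := by
          rw [tsum_ite_eq, hind]
  have hum : u m = (‖f m‖^2)^2 := by
    show ‖⟪f m, f m⟫_ℂ‖ ^ 2 = (‖f m‖^2)^2
    rw [inner_self_eq_norm_sq_to_K, norm_pow, RCLike.norm_ofReal, abs_norm]
  have hredm := (hred (f m)).1
  -- ∑' subtype = A‖fm‖² − ‖fm‖⁴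
  have hval : ∑' i : {i : ℕ // i ≠ m}, u i.1 = A * ‖f m‖^2 - (‖f m‖^2)^2 := by
    rw [hT, hum] at hsplit
    linarith
  rw [hval] at hredm
  nlinarith
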